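/- The set { μⁿ/|μ|ⁿ : n ∈ ℕ } is dense in the unit circle { z ∈ ℂ : |z| = 1 }; equivalently, the set of arguments { arg(μⁿ) mod 2π : n ≥ 1 } is dense in [0, 2π]. -/

import Mathlib

open Polynomial

/-- The polynomial `4X³ - X + 1` has no rational root. -/
lemma stmt_8_no_rat_root (r : ℚ) (hr : 4 * r ^ 3 - r + 1 = 0) : False := by
  set n : ℤ := r.num with hn
  set d : ℤ := (r.den : ℤ) with hd
  have hd0 : (0:ℤ) < d := by rw [hd]; exact_mod_cast r.pos
  have hdq' : (d:ℚ) ≠ 0 := by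
    rw [hd]; push_cast; exact_mod_cast (Nat.cast_ne_zero (R := ℚ)).mpr r.den_nz
  have h1 : (n : ℚ) = r * (d : ℚ) := by
    have h := Rat.num_div_den r
    rw [div_eq_iff (by rw [hd] at hdq'; exact_mod_cast hdq')] at h
    rw [hn, hd]
    push_cast
    linarith [h]
  have hz : 4 * n ^ 3 - n * d ^ 2 + d ^ 3 = 0 := by
    have : ((4 * n ^ 3 - n * d ^ 2 + d ^ 3 : ℤ) : ℚ) = 0 := by
      push_cast [h1]
      linear_combination (d:ℚ)^3 * hr
    exact_mod_cast this
  have hcop : n.natAbs.Coprime r.den := r.reduced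
  have hnd : n ∣ d ^ 3 := ⟨d ^ 2 - 4 * n ^ 2, by linarith [hz]⟩
  have hn1 : n.natAbs = 1 := by
    have h' : n.natAbs ∣ (d ^ 3).natAbs := Int.natAbs_dvd_natAbs.mpr hnd
    have h3 : (d ^ 3).natAbs = r.den ^ 3 := by rw [hd]; simp [Int.natAbs_pow]
    rw [h3] at h'
    exact (hcop.pow_right 3).eq_one_of_dvd h'
  have hdd : d ∣ 4 * n ^ 3 := ⟨n * d - d ^ 2, by linarith [hz]⟩
  have hden4 : d ∣ 4 := by
    have h' : r.den ∣ (4 * n ^ 3).natAbs := by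
      have := Int.natAbs_dvd_natAbs.mpr hdd
      rw [hd] at this; simpa using this
    have h4 : (4 * n ^ 3).natAbs = 4 * n.natAbs ^ 3 := by
      simp [Int.natAbs_mul, Int.natAbs_pow]
    rw [h4, hn1] at h'
    simp at h'
    rw [hd]; exact_mod_cast h'
  have hd4' : d ≤ 4 := Int.le_of_dvd (by norm_num) hden4
  have hn' : n = 1 ∨ n = -1 := Int.natAbs_eq_iff.mp hn1 |>.imp id id
  interval_cases d <;> rcases hn' with h | h <;> rw [h] at hz <;> omega

/-- A complex root of `4X³ - X + 1` is not integral over `ℤ`. -/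
lemma stmt_8_not_integral (x : ℂ) (hx : 4 * x ^ 3 - x + 1 = 0)
    (hint : IsIntegral ℤ x) : False := by
  set q : ℚ[X] := X ^ 3 + C (-(1/4)) * X + C (1/4) with hq
  have hmon : q.Monic := by
    unfold q
    monicity!
  have hdeg : q.natDegree = 3 := by unfold q; compute_degree!
  have haev : aeval x q = 0 := by
    rw [hq]
    simp
    linear_combination hx / 4
  have hirr : Irreducible q := by
    rw [hmon.irreducible_iff_roots_eq_zero_of_degree_le_three (by omega) (by omega)]
    by_contra h
    obtain ⟨r, hr⟩ := Multiset.exists_mem_of_ne_zero h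
    rw [mem_roots hmon.ne_zero] at hr
    have : 4 * r ^ 3 - r + 1 = 0 := by
      have := hr
      rw [IsRoot.def, hq] at this
      simp at this
      linear_combination 4 * this
    exact stmt_8_no_rat_root r this
  have hmq : minpoly ℚ x = q := (minpoly.eq_of_irreducible_of_monic hirr haev hmon).symm
  have hmap : minpoly ℚ x = (minpoly ℤ x).map (algebraMap ℤ ℚ) :=
    minpoly.isIntegrallyClosed_eq_field_fractions ℚ ℂ hint
  have hcoeff : ((minpoly ℤ x).coeff 1 : ℚ) = -(1/4) := by
    have h1 : q.coeff 1 = -(1/4) := by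
      rw [hq]; simp [coeff_X_pow, coeff_C]
    rw [← h1, ← hmq, hmap, coeff_map]
    simp
  have : (4 : ℚ) * ((minpoly ℤ x).coeff 1 : ℚ) = -1 := by rw [hcoeff]; norm_num
  have h4 : (4 * (minpoly ℤ x).coeff 1 : ℤ) = -1 := by exact_mod_cast this
  omega

/-- The set `{ μⁿ/|μ|ⁿ : n ∈ ℕ }` is dense in the unit circle of `ℂ`, where `μ` is the
non-real root of `t³ − t − 2` with `Im μ > 0`. -/
theorem stmt_8 (mu : ℂ) (hmu : mu ^ 3 - mu - 2 = 0) (hmuim : 0 < mu.im) :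
    Metric.sphere (0 : ℂ) 1 ⊆
      closure {w : ℂ | ∃ n : ℕ, w = mu ^ n / ((‖mu‖ : ℂ)) ^ n} := by
  -- basic facts about the real and imaginary parts of μ
  set a : ℝ := mu.re with ha'
  set b : ℝ := mu.im with hb'
  have hb : b ≠ 0 := ne_of_gt hmuim
  have h1 := congrArg Complex.re hmu
  have h2 := congrArg Complex.im hmu
  simp [pow_succ, Complex.mul_re, Complex.mul_im] at h1 h2
  have hb2 : b ^ 2 = 3 * a ^ 2 - 1 := by
    have : b * (3 * a ^ 2 - b ^ 2 - 1) = 0 := by ring_nf; ring_nf at h2; linarith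
    rcases mul_eq_zero.mp this with h | h
    · exact absurd h hb
    · linarith
  have ha : 4 * a ^ 3 - a + 1 = 0 := by nlinarith [h1, hb2]
  have hmu0 : mu ≠ 0 := by
    intro h; rw [h] at hmu; norm_num at hmu
  have habs0 : (‖mu‖ : ℂ) ≠ 0 := by simpa using norm_ne_zero_iff.mpr hmu0
  -- no positive power of μ/|μ| equals 1
  have key : ∀ n : ℕ, n ≠ 0 → (mu / (‖mu‖ : ℂ)) ^ n ≠ 1 := by
    intro n hn hzn
    have hc0 : (starRingEnd ℂ) mu ≠ 0 := by simpa using hmu0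
    have hpow : mu ^ n = (‖mu‖ : ℂ) ^ n := by
      rw [div_pow, div_eq_one_iff_eq (pow_ne_zero n habs0)] at hzn
      exact hzn
    have hconj : (starRingEnd ℂ) (mu ^ n) = mu ^ n := by
      rw [hpow]
      simp [← Complex.ofReal_pow]
    set z : ℂ := mu / (starRingEnd ℂ) mu with hzz
    set w : ℂ := (starRingEnd ℂ) mu / mu with hw
    have hzpow : z ^ n = 1 := by
      rw [hzz, div_pow, ← map_pow, hconj, div_self (pow_ne_zero n hmu0)]
    have hwpow : w ^ n = 1 := by
      rw [hw, div_pow, ← map_pow, hconj, div_self (pow_ne_zero n hmu0)]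
    have hintz : IsIntegral ℤ z :=
      ⟨X ^ n - C 1, monic_X_pow_sub_C 1 hn, by simp [hzpow]⟩
    have hintw : IsIntegral ℤ w :=
      ⟨X ^ n - C 1, monic_X_pow_sub_C 1 hn, by simp [hwpow]⟩
    have hkey : z + w = -(a : ℂ) - 1 := by
      rw [hzz, hw, div_add_div _ _ hc0 hmu0, div_eq_iff (mul_ne_zero hc0 hmu0)]
      rw [Complex.ext_iff]
      constructor
      · simp [Complex.mul_re, Complex.mul_im, ← ha', ← hb']
        ring_nf
        nlinarith [hb2, ha]
      · simp [Complex.mul_re, Complex.mul_im, ← ha', ← hb']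
        ring
    have hinta : IsIntegral ℤ ((a : ℂ)) := by
      have : (a : ℂ) = -(z + w) - 1 := by rw [hkey]; ring
      rw [this]
      exact ((hintz.add hintw).neg.sub isIntegral_one)
    exact stmt_8_not_integral _ (by exact_mod_cast ha) hinta
  -- the point on the circle
  set θ : ℝ := Complex.arg mu with hθ
  set z : Circle := Circle.exp θ with hzdef
  have hz : (z : ℂ) = mu / (‖mu‖ : ℂ) := by
    rw [hzdef, Circle.coe_exp, hθ, eq_div_iff habs0, mul_comm]
    exact Complex.norm_mul_exp_arg_mul_I mu
  have hzn : ∀ n : ℕ, n ≠ 0 → z ^ n ≠ 1 := by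
    intro n hn h
    apply key n hn
    rw [← hz, show ((z:ℂ)) ^ n = ((z ^ n : Circle) : ℂ) from rfl, h, Circle.coe_one]
  -- the ℤ-powers of z are dense in the circle
  have hdense : DenseRange (fun k : ℤ => z ^ k) := by
    rcases AddSubgroup.dense_or_cyclic (AddSubgroup.closure {θ, 2 * Real.pi}) with hS | ⟨g, hg⟩
    · have hsurj : Function.Surjective Circle.exp := fun w => ⟨Complex.arg w, Circle.exp_arg w⟩
      have himg : Circle.exp '' (AddSubgroup.closure {θ, 2 * Real.pi} : Set ℝ) ⊆
          Set.range (fun k : ℤ => z ^ k) := by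
        rintro - ⟨x, hx, rfl⟩
        have hle : AddSubgroup.closure {θ, 2 * Real.pi} ≤
            (AddSubgroup.zmultiples (Additive.ofMul z)).comap Circle.expHom := by
          rw [AddSubgroup.closure_le]
          rintro y (rfl | rfl)
          · exact ⟨1, by simp [Circle.expHom, hzdef]; rfl⟩
          · exact ⟨0, by simp [Circle.expHom]; exact congrArg Additive.ofMul Circle.exp_two_pi.symm⟩
        obtain ⟨k, hk⟩ := hle hx
        exact ⟨k, by simpa using congrArg Additive.toMul hk⟩
      exact (DenseRange.dense_image hsurj.denseRange Circle.exp.continuous hS).mono himg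
    · exfalso
      have hθS : θ ∈ AddSubgroup.closure ({θ, 2 * Real.pi} : Set ℝ) :=
        AddSubgroup.subset_closure (Set.mem_insert _ _)
      have hπS : 2 * Real.pi ∈ AddSubgroup.closure ({θ, 2 * Real.pi} : Set ℝ) :=
        AddSubgroup.subset_closure (Set.mem_insert_of_mem _ rfl)
      rw [hg, AddSubgroup.mem_closure_singleton] at hθS hπS
      obtain ⟨m, hm⟩ := hθS
      obtain ⟨k, hk⟩ := hπS
      have hk0 : k ≠ 0 := by
        rintro rfl
        simp at hk
      have hzk : z ^ k = 1 := by
        have hreal : (k : ℝ) * θ = (m : ℝ) * (2 * Real.pi) := by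
          rw [← hm, ← hk]
          push_cast [zsmul_eq_mul]
          ring
        have e1 : Circle.exp ((k : ℝ) * θ) = z ^ k := by
          have h := map_zsmul Circle.expHom k θ
          have := congrArg Additive.toMul h
          simpa [Circle.expHom, zsmul_eq_mul, hzdef] using this
        rw [← e1, hreal]
        exact Circle.exp_int_mul_two_pi m
      have hzkn : z ^ (k.natAbs : ℕ) = 1 := by
        rcases Int.natAbs_eq k with h | h
        · rw [← zpow_natCast, ← h, hzk]
        · rw [← zpow_natCast, ← neg_neg ((k.natAbs : ℤ)), ← h, zpow_neg, hzk, inv_one]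
      exact hzn k.natAbs (Int.natAbs_ne_zero.mpr hk0) hzkn
  -- conclude
  intro w hw
  set zc : Circle := ⟨w, hw⟩ with hzc
  have hmem : zc ∈ closure (Set.range fun n : ℕ => z ^ n) := by
    have hdn : DenseRange (fun n : ℕ => z ^ n) := denseRange_zpow_iff_pow.mp hdense
    exact hdn zc
  have hcont : Continuous ((↑) : Circle → ℂ) := continuous_subtype_val
  have himage := (image_closure_subset_closure_image hcont) ⟨zc, hmem, rfl⟩
  refine closure_mono ?_ himage
  rintro - ⟨-, ⟨n, rfl⟩, rfl⟩
  refine ⟨n, ?_⟩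
  rw [show ((z ^ n : Circle) : ℂ) = ((z : ℂ)) ^ n from rfl, hz, div_pow]
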